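/- Let X, Y, Z be objects of 𝒟 with Z indecomposable, and suppose there exists a distinguished triangle Y → X ⊕ Z → Z → Y[1]. Then either X ≅ Y, or there exists an object Y′ of 𝒟 and a distinguished triangle Y′ → X → Z → Y′[1] such that Y ≅ Y′ ⊕ Z. -/

import Mathlib

open CategoryTheory CategoryTheory.Limits CategoryTheory.Pretriangulated

universe v u

variable {C : Type u} [Category.{v} C] [Preadditive C] [HasZeroObject C]
  [HasShift C ℤ] [∀ n : ℤ, (shiftFunctor C n).Additive] [Pretriangulated C]
  [HasFiniteBiproducts C]

/-- An object `M` is indecomposable if it is nonzero and in any isomorphism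
`M ≅ A ⊞ B` one of `A`, `B` is zero. -/
def Indecomp (M : C) : Prop :=
  ¬ IsZero M ∧ ∀ A B : C, Nonempty (M ≅ A ⊞ B) → IsZero A ∨ IsZero B

/-- Iso between a product over `Bool` and the binary biproduct. -/
@[simps]
noncomputable def prodBoolIso (G : Bool → C) : (∏ᶜ G) ≅ G true ⊞ G false where
  hom := biprod.lift (Pi.π G true) (Pi.π G false)
  inv := Pi.lift (fun b => match b with
    | true => (biprod.fst : G true ⊞ G false ⟶ G true)
    | false => biprod.snd)
  hom_inv_id := by
    apply Pi.hom_ext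
    rintro (_|_) <;> simp
  inv_hom_id := by
    ext <;> simp

set_option linter.unusedSectionVars false in
lemma iso₁_of_iso₂₃ (T₁ T₂ : Triangle C) (h₁ : T₁ ∈ distTriang C) (h₂ : T₂ ∈ distTriang C)
    (e₂ : T₁.obj₂ ≅ T₂.obj₂) (e₃ : T₁.obj₃ ≅ T₂.obj₃)
    (comm : T₁.mor₂ ≫ e₃.hom = e₂.hom ≫ T₂.mor₂) : Nonempty (T₁.obj₁ ≅ T₂.obj₁) := by
  have e := isoTriangleOfIso₁₂ T₁.rotate T₂.rotate (rot_of_distTriang _ h₁)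
    (rot_of_distTriang _ h₂) e₂ e₃ comm
  exact ⟨(shiftFunctor C (1:ℤ)).preimageIso (Triangle.π₃.mapIso e)⟩

lemma biprod_distTriang (T₁ T₂ : Triangle C) (h₁ : T₁ ∈ distTriang C)
    (h₂ : T₂ ∈ distTriang C) :
    ∃ m₃ : T₁.obj₃ ⊞ T₂.obj₃ ⟶ (T₁.obj₁ ⊞ T₂.obj₁)⟦(1:ℤ)⟧,
      Triangle.mk (biprod.map T₁.mor₁ T₂.mor₁) (biprod.map T₁.mor₂ T₂.mor₂) m₃
        ∈ distTriang C := by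
  let F : Bool → Triangle C := fun b => cond b T₁ T₂
  have hF : ∀ b, F b ∈ distTriang C := by rintro (_|_) <;> assumption
  have hP := productTriangle_distinguished F hF
  let e₁ : (∏ᶜ fun b => (F b).obj₁) ≅ T₁.obj₁ ⊞ T₂.obj₁ := prodBoolIso _
  let e₂ : (∏ᶜ fun b => (F b).obj₂) ≅ T₁.obj₂ ⊞ T₂.obj₂ := prodBoolIso _
  let e₃ : (∏ᶜ fun b => (F b).obj₃) ≅ T₁.obj₃ ⊞ T₂.obj₃ := prodBoolIso _
  refine ⟨e₃.inv ≫ (productTriangle F).mor₃ ≫ (e₁.hom)⟦(1:ℤ)⟧', ?_⟩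
  refine isomorphic_distinguished _ hP _ (Iso.symm ?_)
  refine Triangle.isoMk _ _ e₁ e₂ e₃ ?_ ?_ ?_
  · apply biprod.hom_ext <;> simp [e₁, e₂, prodBoolIso, F] <;> erw [Category.assoc, Category.assoc]
    · erw [biprod.lift_fst, biprod.map_fst, biprod.lift_fst_assoc, Pi.map_π]; rfl
    · erw [biprod.lift_snd, biprod.map_snd, biprod.lift_snd_assoc, Pi.map_π]; rfl
  · apply biprod.hom_ext <;> simp [e₂, e₃, prodBoolIso, F] <;> erw [Category.assoc, Category.assoc]
    · erw [biprod.lift_fst, biprod.map_fst, biprod.lift_fst_assoc, Pi.map_π]; rfl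
    · erw [biprod.lift_snd, biprod.map_snd, biprod.lift_snd_assoc, Pi.map_π]; rfl
  · simp; exact (e₃.hom_inv_id_assoc _).symm

/-- In a `k`-linear pretriangulated category with finite biproducts in
which every object is a finite direct sum of indecomposables and endomorphisms of
indecomposables are scalars: if `Z` is indecomposable and there is a distinguished
triangle `Y → X ⊞ Z → Z → Y⟦1⟧`, then either `X ≅ Y`, or there exists `Y'` and a
distinguished triangle `Y' → X → Z → Y'⟦1⟧` with `Y ≅ Y' ⊞ Z`. -/
theorem stmt_2 {k : Type*} [Field k] [Linear k C]
    (hKS : ∀ M : C, ∃ (n : ℕ) (f : Fin n → C),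
      (∀ i, Indecomp (f i)) ∧ Nonempty (M ≅ ⨁ f))
    (hEnd : ∀ M : C, Indecomp M → ∀ e : M ⟶ M, ∃ c : k, e = c • 𝟙 M)
    (X Y Z : C) (hZ : Indecomp Z)
    (f : Y ⟶ X ⊞ Z) (g : X ⊞ Z ⟶ Z) (h : Z ⟶ Y⟦(1 : ℤ)⟧)
    (hT : Triangle.mk f g h ∈ distTriang C) :
    Nonempty (X ≅ Y) ∨
      ∃ (Y' : C) (a : Y' ⟶ X) (b : X ⟶ Z) (w : Z ⟶ Y'⟦(1 : ℤ)⟧),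
        (Triangle.mk a b w ∈ distTriang C) ∧ Nonempty (Y ≅ Y' ⊞ Z) := by
  obtain ⟨c, hc⟩ := hEnd Z hZ (biprod.inr ≫ g)
  by_cases hc0 : c = 0
  · -- case `biprod.inr ≫ g = 0` : right disjunct
    right
    have hg2 : biprod.inr ≫ g = 0 := by rw [hc, hc0, zero_smul]
    obtain ⟨Y', a, w, hT'⟩ := distinguished_cocone_triangle₁ (biprod.inl ≫ g)
    obtain ⟨m₃, hS⟩ := biprod_distTriang (Triangle.mk a (biprod.inl ≫ g) w)
      (contractibleTriangle Z) hT' (contractible_distinguished Z)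
    refine ⟨Y', a, biprod.inl ≫ g, w, hT', ?_⟩
    refine iso₁_of_iso₂₃ (Triangle.mk f g h) _ hT hS (Iso.refl _)
      (isoBiprodZero (isZero_zero C)) ?_
    dsimp [isoBiprodZero]
    apply biprod.hom_ext
    · apply biprod.hom_ext' <;> simp [hg2] <;> erw [Category.assoc g biprod.inl biprod.fst, biprod.inl_fst, Category.comp_id, Category.id_comp, biprod.map_fst]
      · erw [biprod.inl_fst_assoc]; rfl
      · erw [biprod.inr_fst_assoc, zero_comp, hg2]; rfl
    · apply (isZero_zero C).eq_of_tgt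
  · -- case `biprod.inr ≫ g` is an iso : left disjunct
    left
    obtain ⟨g₁, hg⟩ : ∃ g₁ : X ⟶ Z, g = biprod.fst ≫ g₁ + biprod.snd ≫ (c • 𝟙 Z) :=
      ⟨biprod.inl ≫ g, by apply biprod.hom_ext' <;> simp [hc]⟩
    subst hg
    refine Nonempty.map Iso.symm ?_
    refine iso₁_of_iso₂₃ (Triangle.mk f _ h) _ hT
      (binaryBiproductTriangle_distinguished X Z)
      (Iso.mk (biprod.lift biprod.fst (biprod.fst ≫ g₁ + biprod.snd ≫ (c • 𝟙 Z)))
        (biprod.lift biprod.fst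
          ((biprod.snd - biprod.fst ≫ g₁) ≫ (c⁻¹ • 𝟙 Z))) ?_ ?_)
      (Iso.refl Z) (by simp; erw [Category.comp_id, biprod.lift_snd]; rfl)
    · show (biprod.lift biprod.fst (biprod.fst ≫ g₁ + biprod.snd ≫ (c • 𝟙 Z)) : X ⊞ Z ⟶ X ⊞ Z) ≫ (biprod.lift biprod.fst ((biprod.snd - biprod.fst ≫ g₁) ≫ (c⁻¹ • 𝟙 Z)) : X ⊞ Z ⟶ X ⊞ Z) = 𝟙 (X ⊞ Z)
      apply biprod.hom_ext
      · simp
      · simp only [Category.assoc, biprod.lift_snd, Preadditive.comp_sub,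
          Preadditive.sub_comp, Preadditive.comp_add, Preadditive.add_comp,
          biprod.lift_fst_assoc, Category.id_comp, Linear.comp_smul,
          Linear.smul_comp, Category.comp_id, Category.assoc]
        match_scalars <;> field_simp <;> ring
    · show (biprod.lift biprod.fst ((biprod.snd - biprod.fst ≫ g₁) ≫ (c⁻¹ • 𝟙 Z)) : X ⊞ Z ⟶ X ⊞ Z) ≫ (biprod.lift biprod.fst (biprod.fst ≫ g₁ + biprod.snd ≫ (c • 𝟙 Z)) : X ⊞ Z ⟶ X ⊞ Z) = 𝟙 (X ⊞ Z)
      apply biprod.hom_ext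
      · simp
      · simp only [Category.assoc, biprod.lift_snd, Preadditive.comp_sub,
          Preadditive.sub_comp, Preadditive.comp_add, Preadditive.add_comp,
          biprod.lift_fst_assoc, biprod.lift_snd_assoc, Category.id_comp,
          Linear.comp_smul, Linear.smul_comp, Category.comp_id, Category.assoc]
        match_scalars <;> field_simp <;> ring
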